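/- Let f_D be the Gaussian density with mean m and variance σ² on ℝ, ℓ(x,v) = (x−v)², α ≥ 1, and I(x) = ∫_ℝ ℓ_α(x,v) f_D(v) dv where ℓ_α(x,v) = α(x−v)² for x ≥ v and (x−v)² otherwise. Then I is twice differentiable and I''(x) = 2 + 2(α−1)·Φ((x−m)/σ) ≥ 2 for all x; in particular I is strongly convex and has a unique global minimum. -/

import Mathlib

open Real MeasureTheory

noncomputable def stdNormalCdf (t : ℝ) : ℝ :=
  ∫ s in Set.Iic t, (1 / Real.sqrt (2 * π)) * Real.exp (-(s ^ 2) / 2)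

lemma ftc_Iic {h : ℝ → ℝ} (hc : Continuous h) (hi : Integrable h) (x : ℝ) :
    HasDerivAt (fun y => ∫ v in Set.Iic y, h v) (h x) x := by
  have key : ∀ y : ℝ, ∫ v in Set.Iic y, h v
      = (∫ v in Set.Iic (0:ℝ), h v) + ∫ v in (0:ℝ)..y, h v := by
    intro y
    have := intervalIntegral.integral_Iic_sub_Iic (hi.integrableOn (s := Set.Iic (0:ℝ)))
      (hi.integrableOn (s := Set.Iic y))
    linarith
  have hd : HasDerivAt (fun y => ∫ v in (0:ℝ)..y, h v) (h x) x :=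
    intervalIntegral.integral_hasDerivAt_right (hc.intervalIntegrable 0 x)
      (hc.stronglyMeasurable.stronglyMeasurableAtFilter) hc.continuousAt
  have := hd.const_add (∫ v in Set.Iic (0:ℝ), h v)
  rwa [show (fun y => (∫ v in Set.Iic (0:ℝ), h v) + ∫ v in (0:ℝ)..y, h v)
      = fun y => ∫ v in Set.Iic y, h v from funext fun y => (key y).symm] at this

variable {m σ : ℝ} {fD : ℝ → ℝ}

lemma gauss_eq (hσ : 0 < σ)
    (hfD : ∀ v, fD v = (1 / Real.sqrt (2 * π * σ ^ 2)) * Real.exp (-(v - m) ^ 2 / (2 * σ ^ 2))) :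
    fD = fun v => (1 / Real.sqrt (2 * π * σ ^ 2)) *
      Real.exp (-(1/(2*σ^2)) * (v - m) ^ 2) := by
  funext v
  rw [hfD v]
  congr 1
  congr 1
  field_simp

lemma gauss_cont (hσ : 0 < σ)
    (hfD : ∀ v, fD v = (1 / Real.sqrt (2 * π * σ ^ 2)) * Real.exp (-(v - m) ^ 2 / (2 * σ ^ 2))) :
    Continuous fD := by
  rw [gauss_eq hσ hfD]
  continuity

lemma gauss_nonneg (hσ : 0 < σ)
    (hfD : ∀ v, fD v = (1 / Real.sqrt (2 * π * σ ^ 2)) * Real.exp (-(v - m) ^ 2 / (2 * σ ^ 2))) :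
    ∀ v, 0 ≤ fD v := by
  intro v; rw [hfD v]; positivity

lemma gauss_int (hσ : 0 < σ)
    (hfD : ∀ v, fD v = (1 / Real.sqrt (2 * π * σ ^ 2)) * Real.exp (-(v - m) ^ 2 / (2 * σ ^ 2))) :
    Integrable fD := by
  rw [gauss_eq hσ hfD]
  have hb : (0:ℝ) < 1/(2*σ^2) := by positivity
  exact ((integrable_exp_neg_mul_sq hb).comp_sub_right m).const_mul _

lemma gauss_int1 (hσ : 0 < σ)
    (hfD : ∀ v, fD v = (1 / Real.sqrt (2 * π * σ ^ 2)) * Real.exp (-(v - m) ^ 2 / (2 * σ ^ 2))) :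
    Integrable (fun v => v * fD v) := by
  have hb : (0:ℝ) < 1/(2*σ^2) := by positivity
  set c : ℝ := 1 / Real.sqrt (2 * π * σ ^ 2) with hc
  have h1 : Integrable (fun u : ℝ => c * (u * Real.exp (-(1/(2*σ^2)) * u ^ 2))) :=
    (integrable_mul_exp_neg_mul_sq hb).const_mul c
  have h2 : Integrable (fun v : ℝ => c * ((v - m) * Real.exp (-(1/(2*σ^2)) * (v - m) ^ 2))) :=
    h1.comp_sub_right m
  have h3 : Integrable (fun v : ℝ => (v - m) * fD v) := by
    rw [gauss_eq hσ hfD]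
    refine h2.congr ?_
    filter_upwards with v; ring
  have h4 := h3.add ((gauss_int hσ hfD).const_mul m)
  refine h4.congr ?_
  filter_upwards with v; simp only [Pi.add_apply]; ring

lemma gauss_int2 (hσ : 0 < σ)
    (hfD : ∀ v, fD v = (1 / Real.sqrt (2 * π * σ ^ 2)) * Real.exp (-(v - m) ^ 2 / (2 * σ ^ 2))) :
    Integrable (fun v => v ^ 2 * fD v) := by
  have hb : (0:ℝ) < 1/(2*σ^2) := by positivity
  set c : ℝ := 1 / Real.sqrt (2 * π * σ ^ 2) with hc
  have h0 : Integrable (fun u : ℝ => u ^ 2 * Real.exp (-(1/(2*σ^2)) * u ^ 2)) := by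
    have := integrable_rpow_mul_exp_neg_mul_sq hb (s := 2) (by norm_num)
    refine this.congr ?_
    filter_upwards with u
    rw [show (2:ℝ) = ((2:ℕ):ℝ) by norm_num, Real.rpow_natCast]
  have h1 : Integrable (fun u : ℝ => c * (u ^ 2 * Real.exp (-(1/(2*σ^2)) * u ^ 2))) :=
    h0.const_mul c
  have h2 := h1.comp_sub_right m
  have h3 : Integrable (fun v : ℝ => (v - m) ^ 2 * fD v) := by
    rw [gauss_eq hσ hfD]
    refine h2.congr ?_
    filter_upwards with v; ring
  have h4 := (h3.add (((gauss_int1 hσ hfD).const_mul (2*m)))).add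
    ((gauss_int hσ hfD).const_mul (-(m^2)))
  refine h4.congr ?_
  filter_upwards with v; simp only [Pi.add_apply]; ring

lemma gauss_M0 (hσ : 0 < σ)
    (hfD : ∀ v, fD v = (1 / Real.sqrt (2 * π * σ ^ 2)) * Real.exp (-(v - m) ^ 2 / (2 * σ ^ 2))) :
    ∫ v, fD v = 1 := by
  have hb : (0:ℝ) < 1/(2*σ^2) := by positivity
  have : fD = fun v => (1 / Real.sqrt (2 * π * σ ^ 2)) *
      (fun u => Real.exp (-(1/(2*σ^2)) * u ^ 2)) (v - m) := by
    funext v; rw [hfD v]; simp only; congr 1; congr 1; field_simp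
  rw [this]
  rw [MeasureTheory.integral_const_mul]
  rw [integral_sub_right_eq_self (fun u => Real.exp (-(1/(2*σ^2)) * u ^ 2)) m]
  rw [integral_gaussian]
  rw [show π / (1/(2*σ^2)) = 2 * π * σ ^ 2 by field_simp]
  have h2 : (0:ℝ) < 2 * π * σ ^ 2 := by positivity
  rw [one_div, inv_mul_cancel₀ (Real.sqrt_ne_zero'.mpr h2)]

lemma gauss_M1 (hσ : 0 < σ)
    (hfD : ∀ v, fD v = (1 / Real.sqrt (2 * π * σ ^ 2)) * Real.exp (-(v - m) ^ 2 / (2 * σ ^ 2))) :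
    ∫ v, v * fD v = m := by
  have hb : (0:ℝ) < 1/(2*σ^2) := by positivity
  set c : ℝ := 1 / Real.sqrt (2 * π * σ ^ 2) with hc
  set g : ℝ → ℝ := fun u => u * (c * Real.exp (-(1/(2*σ^2)) * u ^ 2)) with hg
  have hgi : Integrable g := ((integrable_mul_exp_neg_mul_sq hb).const_mul c).congr
    (by filter_upwards with u; simp only [hg]; ring)
  have hodd : ∫ u, g u = 0 := by
    have h1 := MeasureTheory.integral_neg_eq_self g volume
    have h2 : (fun u => g (-u)) = fun u => -(g u) := by
      funext u; simp only [hg]; ring_nf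
    rw [h2, integral_neg] at h1
    linarith
  have hsplit : (fun v => v * fD v) = fun v => g (v - m) + m * fD v := by
    funext v; rw [hfD v, hg]; simp only; ring
  rw [hsplit, MeasureTheory.integral_add (hgi.comp_sub_right m)
    (((gauss_int hσ hfD).const_mul m)),
    integral_sub_right_eq_self g m, hodd, MeasureTheory.integral_const_mul,
    gauss_M0 hσ hfD]
  ring

lemma gauss_cdf (hσ : 0 < σ)
    (hfD : ∀ v, fD v = (1 / Real.sqrt (2 * π * σ ^ 2)) * Real.exp (-(v - m) ^ 2 / (2 * σ ^ 2)))
    (x : ℝ) :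
    ∫ v in Set.Iic x, fD v = stdNormalCdf ((x - m) / σ) := by
  set φ : ℝ → ℝ := fun s => (1 / Real.sqrt (2 * π)) * Real.exp (-(s ^ 2) / 2) with hφ
  set t : ℝ := (x - m) / σ with ht
  set G : ℝ → ℝ := Set.indicator (Set.Iic t) φ with hG
  have hs : Real.sqrt (2 * π * σ ^ 2) = Real.sqrt (2 * π) * σ := by
    rw [show (2:ℝ) * π * σ ^ 2 = (2 * π) * σ ^ 2 by ring,
      Real.sqrt_mul (by positivity), Real.sqrt_sq hσ.le]
  have hfDφ : ∀ v, fD v = σ⁻¹ * φ ((v - m) / σ) := by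
    intro v
    rw [hfD v, hφ]
    simp only
    rw [hs, show -(((v - m)/σ) ^ 2) / 2 = -(v - m) ^ 2 / (2 * σ ^ 2) by
      rw [div_pow]; field_simp]
    have h1 : Real.sqrt (2 * π) ≠ 0 := by positivity
    field_simp
  have hiff : ∀ v : ℝ, (v - m) / σ ≤ t ↔ v ≤ x := by
    intro v
    rw [ht, div_le_div_iff₀ hσ hσ]
    constructor <;> intro h <;> nlinarith
  have hind : ∀ v, Set.indicator (Set.Iic x) fD v = σ⁻¹ * G ((v - m) / σ) := by
    intro v
    by_cases h : v ≤ x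
    · rw [Set.indicator_of_mem (Set.mem_Iic.mpr h), hG,
        Set.indicator_of_mem (Set.mem_Iic.mpr ((hiff v).mpr h)), hfDφ]
    · rw [Set.indicator_of_notMem (by simpa using h), hG,
        Set.indicator_of_notMem (by simpa using fun hh => h ((hiff v).mp hh)), mul_zero]
  set H : ℝ → ℝ := fun u => G (u / σ) with hH
  calc ∫ v in Set.Iic x, fD v
      = ∫ v, Set.indicator (Set.Iic x) fD v := (integral_indicator measurableSet_Iic).symm
    _ = ∫ v, σ⁻¹ * H (v - m) := by
        refine integral_congr_ae (Filter.Eventually.of_forall fun v => ?_)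
        rw [hind v]
    _ = σ⁻¹ * ∫ v, H (v - m) := MeasureTheory.integral_const_mul _ _
    _ = σ⁻¹ * ∫ u, H u := by rw [integral_sub_right_eq_self H m]
    _ = σ⁻¹ * (|σ| • ∫ s, G s) := by rw [hH, MeasureTheory.Measure.integral_comp_div G σ]
    _ = ∫ s, G s := by
        rw [abs_of_pos hσ, smul_eq_mul, ← mul_assoc, inv_mul_cancel₀ hσ.ne', one_mul]
    _ = ∫ s in Set.Iic t, φ s := integral_indicator measurableSet_Iic
    _ = stdNormalCdf t := rfl

theorem stmt1 (m σ : ℝ) (hσ : 0 < σ) (α : ℝ) (hα : 1 ≤ α)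
    (fD : ℝ → ℝ)
    (hfD : ∀ v, fD v = (1 / Real.sqrt (2 * π * σ ^ 2)) * Real.exp (-(v - m) ^ 2 / (2 * σ ^ 2)))
    (ℓα : ℝ → ℝ → ℝ)
    (hℓ : ∀ x v, ℓα x v = if v ≤ x then α * (x - v) ^ 2 else (x - v) ^ 2)
    (I : ℝ → ℝ) (hI : ∀ x, I x = ∫ v, ℓα x v * fD v) :
    ∃ I' : ℝ → ℝ,
      (∀ x, HasDerivAt I (I' x) x) ∧
      (∀ x, HasDerivAt I' (2 + 2 * (α - 1) * stdNormalCdf ((x - m) / σ)) x) ∧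
      (∀ x, 2 ≤ 2 + 2 * (α - 1) * stdNormalCdf ((x - m) / σ)) ∧
      (∃! x₀ : ℝ, ∀ x, x ≠ x₀ → I x₀ < I x) := by
  have hcont := gauss_cont hσ hfD
  have hnn := gauss_nonneg hσ hfD
  have hint0 := gauss_int hσ hfD
  have hint1 := gauss_int1 hσ hfD
  have hint2 := gauss_int2 hσ hfD
  have hM0 := gauss_M0 hσ hfD
  have hM1 := gauss_M1 hσ hfD
  set C0 : ℝ → ℝ := fun x => ∫ v in Set.Iic x, fD v with hC0
  set C1 : ℝ → ℝ := fun x => ∫ v in Set.Iic x, v * fD v with hC1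
  set C2 : ℝ → ℝ := fun x => ∫ v in Set.Iic x, v ^ 2 * fD v with hC2
  have hC0' : ∀ x, HasDerivAt C0 (fD x) x := fun x => ftc_Iic hcont hint0 x
  have hC1' : ∀ x, HasDerivAt C1 (x * fD x) x := fun x =>
    ftc_Iic (continuous_id.mul hcont) hint1 x
  have hC2' : ∀ x, HasDerivAt C2 (x ^ 2 * fD x) x := fun x =>
    ftc_Iic ((continuous_pow 2).mul hcont) hint2 x
  have hC0cdf : ∀ x, C0 x = stdNormalCdf ((x - m) / σ) := fun x => gauss_cdf hσ hfD x
  set M2 : ℝ := ∫ v, v ^ 2 * fD v with hM2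
  -- integrability of (x - v)^2 * fD v
  have hsq_int : ∀ x : ℝ, Integrable (fun v => (x - v) ^ 2 * fD v) := by
    intro x
    have h := (hint2.add (hint1.const_mul (-(2*x)))).add (hint0.const_mul (x^2))
    refine h.congr ?_
    filter_upwards with v; simp only [Pi.add_apply]; ring
  -- the decomposition of I
  have hIeq : ∀ x, I x = x ^ 2 - 2 * m * x + M2
      + (α - 1) * (x ^ 2 * C0 x - 2 * x * C1 x + C2 x) := by
    intro x
    have hpt : ∀ v, ℓα x v * fD v = (x - v) ^ 2 * fD v
        + (α - 1) * Set.indicator (Set.Iic x) (fun v => (x - v) ^ 2 * fD v) v := by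
      intro v
      by_cases h : v ≤ x
      · rw [hℓ, if_pos h, Set.indicator_of_mem (Set.mem_Iic.mpr h)]; ring
      · rw [hℓ, if_neg h, Set.indicator_of_notMem (by simpa using h)]; ring
    have hind_int : Integrable (Set.indicator (Set.Iic x) (fun v => (x - v) ^ 2 * fD v)) :=
      ((hsq_int x).integrableOn).integrable_indicator measurableSet_Iic
    rw [hI x]
    rw [show (fun v => ℓα x v * fD v) = fun v => (x - v) ^ 2 * fD v
        + (α - 1) * Set.indicator (Set.Iic x) (fun v => (x - v) ^ 2 * fD v) v from
      funext hpt]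
    rw [MeasureTheory.integral_add (hsq_int x) (hind_int.const_mul _),
      MeasureTheory.integral_const_mul, integral_indicator measurableSet_Iic]
    have e1 : ∫ v, (x - v) ^ 2 * fD v = x ^ 2 - 2 * m * x + M2 := by
      rw [show (fun v => (x - v) ^ 2 * fD v)
          = fun v => (v ^ 2 * fD v + (-(2*x)) * (v * fD v)) + x ^ 2 * fD v from
        funext fun v => by ring]
      have i12 : Integrable (fun v : ℝ => v ^ 2 * fD v + (-(2*x)) * (v * fD v)) :=
        hint2.add (hint1.const_mul _)
      rw [MeasureTheory.integral_add i12 (hint0.const_mul (x^2)),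
        MeasureTheory.integral_add hint2 (hint1.const_mul (-(2*x))),
        MeasureTheory.integral_const_mul, MeasureTheory.integral_const_mul, hM0, hM1, ← hM2]
      ring
    have e2 : ∫ v in Set.Iic x, (x - v) ^ 2 * fD v
        = x ^ 2 * C0 x - 2 * x * C1 x + C2 x := by
      rw [show (fun v => (x - v) ^ 2 * fD v)
          = fun v => (v ^ 2 * fD v + (-(2*x)) * (v * fD v)) + x ^ 2 * fD v from
        funext fun v => by ring]
      have i12 : IntegrableOn (fun v : ℝ => v ^ 2 * fD v + (-(2*x)) * (v * fD v))
          (Set.Iic x) := (hint2.integrableOn).add ((hint1.integrableOn).const_mul _)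
      rw [MeasureTheory.integral_add i12 ((hint0.integrableOn).const_mul (x^2)),
        MeasureTheory.integral_add hint2.integrableOn ((hint1.integrableOn).const_mul (-(2*x))),
        MeasureTheory.integral_const_mul, MeasureTheory.integral_const_mul]
      simp only [hC0, hC1, hC2]
      ring
    rw [e1, e2]
  set F' : ℝ → ℝ := fun x => 2 * x - 2 * m + (α - 1) * (2 * x * C0 x - 2 * C1 x) with hF'
  have hder1 : ∀ x, HasDerivAt I (F' x) x := by
    intro x
    have h1 : HasDerivAt (fun x : ℝ => x ^ 2 - 2 * m * x + M2) (2 * x - 2 * m) x := by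
      have := ((hasDerivAt_pow 2 x).sub ((hasDerivAt_id x).const_mul (2*m))).add_const M2
      convert this using 1 <;> (try rfl) <;> (try simp) <;> (try ring)
    have h2 : HasDerivAt (fun x => x ^ 2 * C0 x) (2 * x * C0 x + x ^ 2 * fD x) x := by
      have := (hasDerivAt_pow 2 x).mul (hC0' x)
      convert this using 1 <;> (try rfl) <;> (try simp) <;> (try ring)
    have h3 : HasDerivAt (fun x => x * C1 x) (C1 x + x * (x * fD x)) x := by
      have := (hasDerivAt_id x).mul (hC1' x)
      convert this using 1 <;> (try rfl) <;> (try simp) <;> (try ring)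
    have h4 := ((h2.sub (h3.const_mul 2)).add (hC2' x)).const_mul (α - 1)
    have h5 := h1.add h4
    have h6 : HasDerivAt (fun x => x ^ 2 - 2 * m * x + M2
        + (α - 1) * (x ^ 2 * C0 x - 2 * x * C1 x + C2 x)) (F' x) x := by
      convert h5 using 1 <;> try rfl
      · funext y; simp only [Pi.add_apply, Pi.sub_apply]; ring
      · simp only [hF']; ring
    exact h6.congr_of_eventuallyEq (Filter.Eventually.of_forall fun y => hIeq y)
  have hder2 : ∀ x, HasDerivAt F' (2 + 2 * (α - 1) * stdNormalCdf ((x - m) / σ)) x := by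
    intro x
    have hA : HasDerivAt (fun x => 2 * x * C0 x) (2 * C0 x + 2 * x * fD x) x := by
      have := ((hasDerivAt_id x).const_mul 2).mul (hC0' x)
      convert this using 1 <;> (try rfl) <;> (try simp) <;> (try ring)
    have hB := (hC1' x).const_mul 2
    have h1 : HasDerivAt (fun x : ℝ => 2 * x - 2 * m) 2 x := by
      have := ((hasDerivAt_id x).const_mul 2).sub_const (2*m)
      convert this using 1 <;> (try rfl) <;> (try simp)
    have h2 := h1.add ((hA.sub hB).const_mul (α - 1))
    have h3 : HasDerivAt F' (2 + 2 * (α - 1) * C0 x) x := by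
      convert h2 using 1 <;> try rfl
      ring
    rwa [hC0cdf x] at h3
  have hcdf_nonneg : ∀ t : ℝ, 0 ≤ stdNormalCdf t := by
    intro t
    refine setIntegral_nonneg measurableSet_Iic fun s _ => ?_
    positivity
  have haux : ∀ x, (0:ℝ) ≤ 2 * (α - 1) * stdNormalCdf ((x - m) / σ) := fun x =>
    mul_nonneg (by linarith) (hcdf_nonneg _)
  have hpos : ∀ x, (0:ℝ) < 2 + 2 * (α - 1) * stdNormalCdf ((x - m) / σ) := fun x => by
    linarith [haux x]
  refine ⟨F', hder1, hder2, fun x => by linarith [haux x], ?_⟩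
  -- unique global minimum
  have hIcont : Continuous I := by
    rw [continuous_iff_continuousAt]; exact fun x => (hder1 x).continuousAt
  have hF'cont : Continuous F' := by
    rw [continuous_iff_continuousAt]; exact fun x => (hder2 x).continuousAt
  have hmono : StrictMono F' := by
    refine strictMono_of_deriv_pos fun x => ?_
    rw [(hder2 x).deriv]
    exact hpos x
  -- the helper: x * C0 x - C1 x = ∫ v in Iic x, (x - v) * fD v
  have hsub : ∀ x : ℝ, x * C0 x - C1 x = ∫ v in Set.Iic x, (x - v) * fD v := by
    intro x
    rw [show (fun v => (x - v) * fD v) = fun v => x * fD v - v * fD v from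
      funext fun v => by ring]
    rw [MeasureTheory.integral_sub ((hint0.integrableOn).const_mul x) hint1.integrableOn,
      MeasureTheory.integral_const_mul]
  set K : ℝ := ∫ v in Set.Iic m, (m - v) * fD v with hK
  have hKnonneg : 0 ≤ K :=
    setIntegral_nonneg measurableSet_Iic fun v hv =>
      mul_nonneg (by simp only [Set.mem_Iic] at hv; linarith) (hnn v)
  have hKm : m * C0 m - C1 m = K := hsub m
  have hbound : ∀ x : ℝ, x ≤ m → x * C0 x - C1 x ≤ K := by
    intro x hx
    rw [hsub x]
    have hintx : IntegrableOn (fun v => (x - v) * fD v) (Set.Iic x) := by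
      have : Integrable (fun v => (x - v) * fD v) := by
        refine ((hint0.const_mul x).sub hint1).congr ?_
        filter_upwards with v; simp only [Pi.sub_apply]; ring
      exact this.integrableOn
    have hintm : IntegrableOn (fun v => (m - v) * fD v) (Set.Iic m) := by
      have : Integrable (fun v => (m - v) * fD v) := by
        refine ((hint0.const_mul m).sub hint1).congr ?_
        filter_upwards with v; simp only [Pi.sub_apply]; ring
      exact this.integrableOn
    calc ∫ v in Set.Iic x, (x - v) * fD v
        ≤ ∫ v in Set.Iic x, (m - v) * fD v := by
          refine setIntegral_mono_on hintx (hintm.mono_set (Set.Iic_subset_Iic.mpr hx))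
            measurableSet_Iic fun v hv => ?_
          exact mul_le_mul_of_nonneg_right (by linarith) (hnn v)
      _ ≤ K := by
          refine setIntegral_mono_set hintm ?_ ((Set.Iic_subset_Iic.mpr hx).eventuallyLE)
          refine (ae_restrict_iff' measurableSet_Iic).mpr (Filter.Eventually.of_forall ?_)
          intro v hv
          simp only [Set.mem_Iic] at hv
          exact mul_nonneg (by linarith) (hnn v)
  set a : ℝ := m - (α - 1) * K - 1 with ha
  have ham : a ≤ m := by nlinarith
  have hF'a : F' a < 0 := by
    have h1 := hbound a ham
    have h2 : (α - 1) * (a * C0 a - C1 a) ≤ (α - 1) * K :=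
      mul_le_mul_of_nonneg_left h1 (by linarith)
    simp only [hF']
    nlinarith
  have hF'm : 0 ≤ F' m := by
    simp only [hF']
    nlinarith [mul_nonneg (by linarith : (0:ℝ) ≤ α - 1) hKnonneg, hKm]
  obtain ⟨x₀, hx₀mem, hx₀⟩ : ∃ x₀ ∈ Set.Icc a m, F' x₀ = 0 := by
    have h0 : (0:ℝ) ∈ Set.Icc (F' a) (F' m) := ⟨hF'a.le, hF'm⟩
    obtain ⟨x₀, hmem, heq⟩ := intermediate_value_Icc ham hF'cont.continuousOn h0
    exact ⟨x₀, hmem, heq⟩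
  have hmin : ∀ x, x ≠ x₀ → I x₀ < I x := by
    intro x hx
    rcases lt_or_gt_of_ne hx with h | h
    · -- x < x₀
      obtain ⟨c, hc, hceq⟩ := exists_hasDerivAt_eq_slope I F' h hIcont.continuousOn
        (fun y _ => hder1 y)
      have hcneg : F' c < 0 := by
        have := hmono hc.2
        rw [hx₀] at this
        linarith
      have hxx : x₀ - x > 0 := by linarith
      have : I x₀ - I x = F' c * (x₀ - x) := by
        field_simp at hceq
        linarith [hceq]
      nlinarith
    · -- x₀ < x
      obtain ⟨c, hc, hceq⟩ := exists_hasDerivAt_eq_slope I F' h hIcont.continuousOn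
        (fun y _ => hder1 y)
      have hcpos : 0 < F' c := by
        have := hmono hc.1
        rw [hx₀] at this
        linarith
      have hxx : x - x₀ > 0 := by linarith
      have : I x - I x₀ = F' c * (x - x₀) := by
        field_simp at hceq
        linarith [hceq]
      nlinarith
  refine ⟨x₀, hmin, ?_⟩
  intro y hy
  by_contra hne
  have h1 := hmin y hne
  have h2 := hy x₀ (fun e => hne e.symm)
  linarith
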